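/- For the hard-core model on the 2K×3L triangular grid Λ, there exists a path ω* from a to b in X whose height satisfies Φ_{ω*} − H(a) = min{K, 2L} + 1. -/

import Mathlib

open Finset

variable (K L : ℕ) [NeZero K] [NeZero L]

/-- Vertices of the `2K × 3L` triangular grid: pairs `(i,j) ∈ (ℤ/2K) × (ℤ/6L)` with `i+j` even. -/
abbrev Vert (K L : ℕ) [NeZero K] [NeZero L] : Type :=
  {p : ZMod (2 * K) × ZMod (6 * L) // (p.1.val + p.2.val) % 2 = 0}

/-- Adjacency in the triangular grid with periodic boundary conditions. -/
abbrev Adj (v w : Vert K L) : Prop :=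
  (w.1.1 = v.1.1 ∧ (w.1.2 = v.1.2 + 2 ∨ w.1.2 = v.1.2 - 2)) ∨
  ((w.1.1 = v.1.1 + 1 ∨ w.1.1 = v.1.1 - 1) ∧ (w.1.2 = v.1.2 + 1 ∨ w.1.2 = v.1.2 - 1))

/-- A particle configuration on the grid. -/
abbrev Cfg (K L : ℕ) [NeZero K] [NeZero L] : Type := Vert K L → Bool

/-- Hard-core condition: no two adjacent occupied sites. -/
abbrev HardCore (σ : Cfg K L) : Prop :=
  ∀ v w : Vert K L, Adj K L v w → ¬(σ v = true ∧ σ w = true)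

/-- Number of particles of a configuration. -/
def nParticles (σ : Cfg K L) : ℕ := (univ.filter fun v => σ v = true).card

/-- The energy (Hamiltonian) `H(σ) = -Σ_v σ(v)`. -/
def energy (σ : Cfg K L) : ℤ := -(nParticles K L σ : ℤ)

/-- The configuration `a`: indicator of `Λ_a` (columns `j ≡ 0 (mod 3)`). -/
def confA : Cfg K L := fun v => decide (v.1.2.val % 3 = 0)

/-- The configuration `b`: indicator of `Λ_b` (columns `j ≡ 1 (mod 3)`). -/
def confB : Cfg K L := fun v => decide (v.1.2.val % 3 = 1)

/-- The configuration `c`: indicator of `Λ_c` (columns `j ≡ 2 (mod 3)`). -/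
def confC : Cfg K L := fun v => decide (v.1.2.val % 3 = 2)

/-- A path in the energy landscape: a finite sequence of hard-core configurations,
consecutive ones differing in at most one vertex. -/
structure HCPath (σ σ' : Cfg K L) where
  n : ℕ
  ω : Fin (n + 1) → Cfg K L
  first : ω 0 = σ
  last : ω (Fin.last n) = σ'
  hc : ∀ i, HardCore K L (ω i)
  step : ∀ i : Fin n,
    ((univ : Finset (Vert K L)).filter fun v => ω i.castSucc v ≠ ω i.succ v).card ≤ 1

/-- Height of a path: maximal energy along it. -/
noncomputable def pathHeight {σ σ' : Cfg K L} (p : HCPath K L σ σ') : ℤ :=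
  Finset.univ.sup' Finset.univ_nonempty fun i => energy K L (p.ω i)

/-- Communication height `Φ(σ,σ')`: minimal height over all paths from `σ` to `σ'`. -/
noncomputable def commHeight (σ σ' : Cfg K L) : ℤ :=
  sInf {h : ℤ | ∃ p : HCPath K L σ σ', pathHeight K L p = h}

/-- The horizontal stripe `S_i = r_{2i} ∪ r_{2i+1}`. -/
abbrev inHStripe (i : ℕ) (v : Vert K L) : Prop :=
  v.1.1 = ((2 * i : ℕ) : ZMod (2 * K)) ∨ v.1.1 = ((2 * i + 1 : ℕ) : ZMod (2 * K))

/-- The vertical stripe `C_j = c_j ∪ c_{j+1} ∪ c_{j+2}` (column indices mod `6L`). -/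
abbrev inVStripe (j : ℕ) (v : Vert K L) : Prop :=
  v.1.2 = ((j : ℕ) : ZMod (6 * L)) ∨ v.1.2 = ((j + 1 : ℕ) : ZMod (6 * L)) ∨
    v.1.2 = ((j + 2 : ℕ) : ZMod (6 * L))

/-- Two configurations agree on a region. -/
def agreesOn (P : Vert K L → Prop) (σ τ : Cfg K L) : Prop := ∀ v, P v → σ v = τ v


/-! ### Auxiliary machinery for the reference path -/

section RefPathAux

instance : NeZero (2 * K) := ⟨Nat.mul_ne_zero (by norm_num) (NeZero.ne K)⟩
instance : NeZero (6 * L) := ⟨Nat.mul_ne_zero (by norm_num) (NeZero.ne L)⟩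

lemma Kpos : 0 < K := Nat.pos_of_ne_zero (NeZero.ne K)
lemma Lpos : 0 < L := Nat.pos_of_ne_zero (NeZero.ne L)

lemma iv_lt (v : Vert K L) : v.1.1.val < 2 * K := ZMod.val_lt _
lemma jv_lt (v : Vert K L) : v.1.2.val < 6 * L := ZMod.val_lt _
lemma v_parity (v : Vert K L) : (v.1.1.val + v.1.2.val) % 2 = 0 := v.2

lemma confA_iff (v : Vert K L) : confA K L v = true ↔ v.1.2.val % 3 = 0 := by
  simp [confA]
lemma confB_iff (v : Vert K L) : confB K L v = true ↔ v.1.2.val % 3 = 1 := by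
  simp [confB]

lemma zval_shift {n : ℕ} [NeZero n] (c : ℕ) (hc : c < n) {a b : ZMod n}
    (h : b = a + (c : ZMod n)) : b.val = (a.val + c) % n := by
  rw [h, ZMod.val_add, ZMod.val_natCast, Nat.mod_eq_of_lt hc]

lemma zval_shift' {n : ℕ} [NeZero n] (c : ℕ) (hc : c < n) {a b : ZMod n}
    (h : b = a - (c : ZMod n)) : a.val = (b.val + c) % n := by
  refine zval_shift c hc ?_
  rw [h]; ring

/-- Normalized form of adjacency, in terms of `val`s. -/
lemma adj_classify {v w : Vert K L} (h : Adj K L v w) :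
    (w.1.1.val = v.1.1.val ∧
      (w.1.2.val = (v.1.2.val + 2) % (6 * L) ∨ v.1.2.val = (w.1.2.val + 2) % (6 * L))) ∨
    ((w.1.1.val = (v.1.1.val + 1) % (2 * K) ∨ v.1.1.val = (w.1.1.val + 1) % (2 * K)) ∧
      (w.1.2.val = (v.1.2.val + 1) % (6 * L) ∨ v.1.2.val = (w.1.2.val + 1) % (6 * L))) := by
  have hK := Kpos K; have hL := Lpos L
  have h1 : (1 : ZMod (2 * K)) = ((1 : ℕ) : ZMod (2 * K)) := by norm_cast
  have h1' : (1 : ZMod (6 * L)) = ((1 : ℕ) : ZMod (6 * L)) := by norm_cast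
  have h2' : (2 : ZMod (6 * L)) = ((2 : ℕ) : ZMod (6 * L)) := by norm_cast
  rcases h with ⟨hi, hj⟩ | ⟨hi, hj⟩
  · left
    refine ⟨by rw [hi], ?_⟩
    rcases hj with hj | hj
    · exact Or.inl (zval_shift 2 (by omega) (by rw [hj, h2']))
    · exact Or.inr (zval_shift' 2 (by omega) (by rw [hj, h2']))
  · right
    constructor
    · rcases hi with hi | hi
      · exact Or.inl (zval_shift 1 (by omega) (by rw [hi, h1]))
      · exact Or.inr (zval_shift' 1 (by omega) (by rw [hi, h1]))
    · rcases hj with hj | hj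
      · exact Or.inl (zval_shift 1 (by omega) (by rw [hj, h1']))
      · exact Or.inr (zval_shift' 1 (by omega) (by rw [hj, h1']))

omit [NeZero K] [NeZero L] in
lemma mod3_of_mod6L (a : ℕ) : a % (6 * L) % 3 = a % 3 :=
  Nat.mod_mod_of_dvd a ⟨2 * L, by ring⟩

lemma adj_mod3 {v w : Vert K L} (h : Adj K L v w) :
    w.1.2.val % 3 = (v.1.2.val + 1) % 3 ∨ w.1.2.val % 3 = (v.1.2.val + 2) % 3 := by
  rcases adj_classify K L h with ⟨-, hj | hj⟩ | ⟨-, hj | hj⟩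
  · right; rw [hj, mod3_of_mod6L]
  · have h3 : v.1.2.val % 3 = (w.1.2.val + 2) % 3 := by rw [hj, mod3_of_mod6L]
    omega
  · left; rw [hj, mod3_of_mod6L]
  · have h3 : v.1.2.val % 3 = (w.1.2.val + 1) % 3 := by rw [hj, mod3_of_mod6L]
    omega

lemma hardcoreA : HardCore K L (confA K L) := by
  intro v w hadj ⟨hv, hw⟩
  rw [confA_iff] at hv hw
  rcases adj_mod3 K L hadj with h | h <;> omega

lemma hardcoreB : HardCore K L (confB K L) := by
  intro v w hadj ⟨hv, hw⟩
  rw [confB_iff] at hv hw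
  rcases adj_mod3 K L hadj with h | h <;> omega

end RefPathAux

section GenericPath

lemma adj_symm {v w : Vert K L} (h : Adj K L v w) : Adj K L w v := by
  rcases h with ⟨hi, hj | hj⟩ | ⟨hi | hi, hj | hj⟩
  · exact Or.inl ⟨hi.symm, Or.inr (by rw [hj]; ring)⟩
  · exact Or.inl ⟨hi.symm, Or.inl (by rw [hj]; ring)⟩
  · exact Or.inr ⟨Or.inr (by rw [hi]; ring), Or.inr (by rw [hj]; ring)⟩
  · exact Or.inr ⟨Or.inr (by rw [hi]; ring), Or.inl (by rw [hj]; ring)⟩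
  · exact Or.inr ⟨Or.inl (by rw [hi]; ring), Or.inr (by rw [hj]; ring)⟩
  · exact Or.inr ⟨Or.inl (by rw [hi]; ring), Or.inl (by rw [hj]; ring)⟩

lemma notAB (v : Vert K L) : ¬(confA K L v = true ∧ confB K L v = true) := by
  rw [confA_iff, confB_iff]; omega

/-- The interpolating configuration at time `t` for a schedule `T`. -/
def Om (T : Vert K L → ℕ) (t : ℕ) : Cfg K L :=
  fun v => if T v < t then confB K L v else confA K L v

lemma Om_zero (T : Vert K L → ℕ) : Om K L T 0 = confA K L := by
  funext v; simp [Om]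

lemma Om_last (T : Vert K L → ℕ) (n : ℕ)
    (h : ∀ v, confA K L v ≠ confB K L v → T v < n) : Om K L T n = confB K L := by
  funext v
  unfold Om
  split
  · rfl
  · rename_i hn
    by_contra hne
    exact hn (h v hne)

lemma Om_hc (T : Vert K L → ℕ) (t : ℕ)
    (hcross : ∀ v w, Adj K L v w → confA K L v = true → confB K L w = true → T v ≤ T w) :
    HardCore K L (Om K L T t) := by
  intro v w hadj ⟨hv, hw⟩
  unfold Om at hv hw
  by_cases h1 : T v < t <;> by_cases h2 : T w < t <;> simp [h1, h2] at hv hw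
  · exact hardcoreB K L v w hadj ⟨hv, hw⟩
  · exact absurd (hcross w v (adj_symm K L hadj) hw hv) (by omega)
  · exact absurd (hcross v w hadj hv hw) (by omega)
  · exact hardcoreA K L v w hadj ⟨hv, hw⟩

lemma Om_step (T : Vert K L → ℕ) (t : ℕ)
    (hinj : ∀ v w, confA K L v ≠ confB K L v → confA K L w ≠ confB K L w →
      T v = T w → v = w) :
    ((univ : Finset (Vert K L)).filter fun v => Om K L T t v ≠ Om K L T (t + 1) v).card ≤ 1 := by
  apply Finset.card_le_one.2
  intro v hv w hw
  simp only [Finset.mem_filter, Finset.mem_univ, true_and, Om] at hv hw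
  have hv' : T v = t ∧ confA K L v ≠ confB K L v := by
    have hv2 := (Finset.mem_filter.1 hv).2
    by_cases h1 : T v < t
    · rw [if_pos h1, if_pos (show T v < t + 1 by omega)] at hv2; exact absurd rfl hv2
    · by_cases h2 : T v < t + 1
      · rw [if_neg h1, if_pos h2] at hv2; exact ⟨by omega, hv2⟩
      · rw [if_neg h1, if_neg h2] at hv2; exact absurd rfl hv2
  have hw' : T w = t ∧ confA K L w ≠ confB K L w := by
    have hw2 := (Finset.mem_filter.1 hw).2
    by_cases h1 : T w < t
    · rw [if_pos h1, if_pos (show T w < t + 1 by omega)] at hw2; exact absurd rfl hw2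
    · by_cases h2 : T w < t + 1
      · rw [if_neg h1, if_pos h2] at hw2; exact ⟨by omega, hw2⟩
      · rw [if_neg h1, if_neg h2] at hw2; exact absurd rfl hw2
  exact hinj v w hv'.2 hw'.2 (hv'.1.trans hw'.1.symm)

/-- Lower bound for the particle number along the path. -/
lemma Om_count_lower (T : Vert K L → ℕ) (t B : ℕ) (partner : Vert K L → Vert K L)
    (hpB : ∀ v, confA K L v = true → confB K L (partner v) = true)
    (hpInj : ∀ v w, partner v = partner w → v = w)
    (hbad : ((univ : Finset (Vert K L)).filter fun v =>
        confA K L v = true ∧ T v < t ∧ t ≤ T (partner v)).card ≤ B) :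
    nParticles K L (confA K L) ≤ nParticles K L (Om K L T t) + B := by
  classical
  set A := (univ : Finset (Vert K L)).filter fun v => confA K L v = true with hA
  set bad := (univ : Finset (Vert K L)).filter fun v =>
      confA K L v = true ∧ T v < t ∧ t ≤ T (partner v) with hbd
  set tgt := (univ : Finset (Vert K L)).filter fun v => Om K L T t v = true with htgt
  have key : (A \ bad).card ≤ tgt.card := by
    apply Finset.card_le_card_of_injOn (fun v => if t ≤ T v then v else partner v)
    · intro v hv
      simp only [hA, hbd, Finset.mem_coe, Finset.mem_sdiff, Finset.mem_filter, Finset.mem_univ, true_and] at hv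
      obtain ⟨hva, hvb⟩ := hv
      simp only [htgt, Finset.mem_coe, Finset.mem_filter, Finset.mem_univ, true_and]
      by_cases hT : t ≤ T v
      · simp [hT, Om, show ¬ T v < t by omega, hva]
      · have hpt : T (partner v) < t := by
          by_contra hc
          exact hvb ⟨hva, by omega, by omega⟩
        simp [hT, Om, hpt, hpB v hva]
    · intro v hv w hw heq
      simp only [hA, hbd, Finset.mem_coe, Finset.mem_sdiff, Finset.mem_filter,
        Finset.mem_univ, true_and] at hv hw
      by_cases h1 : t ≤ T v <;> by_cases h2 : t ≤ T w <;> simp [h1, h2] at heq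
      · exact heq
      · exact absurd ⟨heq ▸ hv.1, hpB w hw.1⟩ (notAB K L (partner w))
      · exact absurd ⟨heq ▸ hw.1, hpB v hv.1⟩ (notAB K L (partner v))
      · exact hpInj v w heq
  have h1 : A.card ≤ (A \ bad).card + bad.card := by
    have h2 : A \ bad ∪ A ∩ bad = A := Finset.sdiff_union_inter A bad
    have h3 : (A \ bad ∪ A ∩ bad).card ≤ (A \ bad).card + (A ∩ bad).card :=
      Finset.card_union_le _ _
    rw [h2] at h3
    have h4 : (A ∩ bad).card ≤ bad.card := Finset.card_le_card (Finset.inter_subset_right)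
    omega
  calc A.card ≤ (A \ bad).card + bad.card := h1
    _ ≤ tgt.card + B := Nat.add_le_add key hbad

/-- Exact count at a time when only `D` has been changed (only removals so far). -/
lemma Om_count_at (T : Vert K L → ℕ) (t : ℕ) (D : Finset (Vert K L))
    (hD : ∀ v, Om K L T t v = true ↔ (confA K L v = true ∧ v ∉ D))
    (hDA : ∀ v ∈ D, confA K L v = true) :
    nParticles K L (Om K L T t) + D.card = nParticles K L (confA K L) := by
  classical
  have hfil : (univ : Finset (Vert K L)).filter (fun v => Om K L T t v = true)
      = ((univ : Finset (Vert K L)).filter fun v => confA K L v = true) \ D := by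
    ext v
    simp only [Finset.mem_filter, Finset.mem_sdiff, Finset.mem_univ, true_and]
    exact hD v
  have hsub : D ⊆ (univ : Finset (Vert K L)).filter fun v => confA K L v = true := by
    intro v hv; simp only [Finset.mem_filter, Finset.mem_univ, true_and]; exact hDA v hv
  unfold nParticles
  rw [hfil, Finset.card_sdiff_of_subset hsub]
  have := Finset.card_le_card hsub
  omega

end GenericPath

section NatHelpers

omit [NeZero K] [NeZero L]

lemma twoM_inj {M a b r s : ℕ} (hr : r < M) (hs : s < M)
    (h : a * M + r = b * M + s) : a = b ∧ r = s := by
  have hab : a = b := by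
    rcases Nat.lt_trichotomy a b with hlt | he | hgt
    · have h1 : (a + 1) * M ≤ b * M := Nat.mul_le_mul_right M (by omega)
      rw [add_mul, one_mul] at h1
      linarith
    · exact he
    · have h1 : (b + 1) * M ≤ a * M := Nat.mul_le_mul_right M (by omega)
      rw [add_mul, one_mul] at h1
      linarith
  subst hab
  exact ⟨rfl, by linarith⟩

lemma mod_two_cases {a n : ℕ} (h : a < 2 * n) :
    a % n = a ∨ (n ≤ a ∧ a % n = a - n) := by
  rcases Nat.lt_or_ge a n with h1 | h1
  · exact Or.inl (Nat.mod_eq_of_lt h1)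
  · refine Or.inr ⟨h1, ?_⟩
    rw [Nat.mod_eq_sub_mod h1, Nat.mod_eq_of_lt (by omega)]

lemma mul_mono_r {x c M : ℕ} (h : x ≤ c) : x * M ≤ c * M := Nat.mul_le_mul_right M h

end NatHelpers

lemma vert_ext {v w : Vert K L} (hi : v.1.1.val = w.1.1.val)
    (hj : v.1.2.val = w.1.2.val) : v = w :=
  Subtype.ext (Prod.ext (ZMod.val_injective _ hi) (ZMod.val_injective _ hj))

lemma ab_site {v : Vert K L} (h : confA K L v ≠ confB K L v) :
    v.1.2.val % 3 = 0 ∨ v.1.2.val % 3 = 1 := by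
  by_contra hc
  push_neg at hc
  simp [confA, confB, hc.1, hc.2] at h

section Case1

/-- Schedule for the vertical sweep (used when `K ≤ 2L`). -/
def T1 : Vert K L → ℕ := fun v =>
  if v.1.2.val % 3 = 0 then
    (if v.1.2.val / 3 = 0 then v.1.1.val / 2
     else K + (v.1.2.val / 3 - 1) * (2 * K) + 2 * (v.1.1.val / 2))
  else if v.1.2.val % 3 = 1 then
    (if v.1.2.val / 3 = 2 * L - 1 then K + (2 * L - 1) * (2 * K) + v.1.1.val / 2
     else K + (v.1.2.val / 3) * (2 * K) + 2 * (v.1.1.val / 2) + 1)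
  else 4 * K * L

/-- Structure of the schedule `T1` on occupied sites. -/
lemma T1_desc (v : Vert K L) (h : confA K L v ≠ confB K L v) :
    (∃ r, r < K ∧ v.1.2.val = 0 ∧ v.1.1.val = 2 * r ∧ T1 K L v = r) ∨
    (∃ x r, 1 ≤ x ∧ x ≤ 2 * L - 1 ∧ r < K ∧ v.1.2.val = 3 * x ∧
      v.1.1.val = 2 * r + x % 2 ∧ T1 K L v = K + (x - 1) * (2 * K) + 2 * r) ∨
    (∃ x r, x ≤ 2 * L - 2 ∧ r < K ∧ v.1.2.val = 3 * x + 1 ∧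
      v.1.1.val = 2 * r + (x + 1) % 2 ∧ T1 K L v = K + x * (2 * K) + 2 * r + 1) ∨
    (∃ r, r < K ∧ v.1.2.val = 6 * L - 2 ∧ v.1.1.val = 2 * r ∧
      T1 K L v = K + (2 * L - 1) * (2 * K) + r) := by
  have hK := Kpos K; have hL := Lpos L
  have hiv := iv_lt K L v; have hjv := jv_lt K L v
  have hpar := v_parity K L v
  rcases ab_site K L h with h3 | h3
  · by_cases hx : v.1.2.val / 3 = 0
    · left
      exact ⟨v.1.1.val / 2, by omega, by omega, by omega, by simp [T1, h3, hx]⟩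
    · right; left
      refine ⟨v.1.2.val / 3, v.1.1.val / 2, by omega, by omega, by omega, by omega,
        by omega, ?_⟩
      simp [T1, h3, hx]
  · by_cases hx : v.1.2.val / 3 = 2 * L - 1
    · right; right; right
      refine ⟨v.1.1.val / 2, by omega, by omega, by omega, ?_⟩
      simp only [T1]
      rw [if_neg (by omega), if_pos h3, if_pos hx]
    · right; right; left
      refine ⟨v.1.2.val / 3, v.1.1.val / 2, by omega, by omega, by omega, by omega, ?_⟩
      simp only [T1]
      rw [if_neg (by omega), if_pos h3, if_neg hx]

lemma kit1 : (2 * L - 2) * (2 * K) + 2 * (2 * K) = (2 * L) * (2 * K) := by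
  have h := add_mul (2 * L - 2) 2 (2 * K)
  rw [show (2 * L - 2) + 2 = 2 * L by have := Lpos L; omega] at h
  omega

lemma kit2 : (2 * L - 1) * (2 * K) + 1 * (2 * K) = (2 * L) * (2 * K) := by
  have h := add_mul (2 * L - 1) 1 (2 * K)
  rw [show (2 * L - 1) + 1 = 2 * L by have := Lpos L; omega] at h
  omega

lemma T1_lt (v : Vert K L) (h : confA K L v ≠ confB K L v) : T1 K L v < 4 * K * L := by
  have hK := Kpos K; have hL := Lpos L
  have k1 := kit1 K L; have k2 := kit2 K L
  have e4 : (2 * L) * (2 * K) = 4 * K * L := by ring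
  rcases T1_desc K L v h with ⟨r, hr, -, -, hT⟩ | ⟨x, r, hx1, hx2, hr, -, -, hT⟩ |
    ⟨x, r, hx, hr, -, -, hT⟩ | ⟨r, hr, -, -, hT⟩
  · have : 1 * K ≤ (4 * L) * K := mul_mono_r (by omega)
    linarith
  · have : (x - 1) * (2 * K) ≤ (2 * L - 2) * (2 * K) := mul_mono_r (by omega)
    linarith
  · have : x * (2 * K) ≤ (2 * L - 2) * (2 * K) := mul_mono_r (by omega)
    linarith
  · linarith

lemma T1_b_lb (v : Vert K L) (hv : confB K L v = true) : K + 1 ≤ T1 K L v := by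
  have hK := Kpos K; have hL := Lpos L
  have hab : confA K L v ≠ confB K L v := by
    intro h
    exact notAB K L v ⟨h ▸ hv, hv⟩
  have hj : v.1.2.val % 3 = 1 := (confB_iff K L v).1 hv
  rcases T1_desc K L v hab with ⟨r, hr, hjv, -, hT⟩ | ⟨x, r, hx1, hx2, hr, hjv, -, hT⟩ |
    ⟨x, r, hx, hr, hjv, -, hT⟩ | ⟨r, hr, hjv, -, hT⟩
  · omega
  · omega
  · rw [hT]; linarith [Nat.zero_le (x * (2 * K))]
  · rw [hT]
    have : 1 * 1 ≤ (2 * L - 1) * (2 * K) := Nat.mul_le_mul (by omega) (by omega)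
    linarith

lemma T1_inj (v w : Vert K L) (hv : confA K L v ≠ confB K L v)
    (hw : confA K L w ≠ confB K L w) (h : T1 K L v = T1 K L w) : v = w := by
  have hK := Kpos K; have hL := Lpos L
  have k1 := kit1 K L; have k2 := kit2 K L
  rcases T1_desc K L v hv with ⟨r, hr, hj, hi, hT⟩ | ⟨x, r, hx1, hx2, hr, hj, hi, hT⟩ |
    ⟨x, r, hx, hr, hj, hi, hT⟩ | ⟨r, hr, hj, hi, hT⟩ <;>
  rcases T1_desc K L w hw with ⟨s, hs, hj', hi', hT'⟩ | ⟨y, s, hy1, hy2, hs, hj', hi', hT'⟩ |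
    ⟨y, s, hy, hs, hj', hi', hT'⟩ | ⟨s, hs, hj', hi', hT'⟩ <;>
  rw [hT, hT'] at h
  -- (A0, _)
  · exact vert_ext K L (by omega) (by omega)
  · exfalso; linarith [Nat.zero_le ((y - 1) * (2 * K))]
  · exfalso; linarith [Nat.zero_le (y * (2 * K))]
  · exfalso
    have : 1 * 1 ≤ (2 * L - 1) * (2 * K) := Nat.mul_le_mul (by omega) (by omega)
    linarith
  -- (A1, _)
  · exfalso; linarith [Nat.zero_le ((x - 1) * (2 * K))]
  · obtain ⟨he1, he2⟩ := twoM_inj (M := 2 * K) (by omega) (by omega)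
      (show (x - 1) * (2 * K) + 2 * r = (y - 1) * (2 * K) + 2 * s by linarith)
    exact vert_ext K L (by omega) (by omega)
  · exfalso
    have ea : (x - 1) * (2 * K) = 2 * ((x - 1) * K) := by ring
    have eb : y * (2 * K) = 2 * (y * K) := by ring
    rw [ea, eb] at h
    set A := (x - 1) * K
    set B := y * K
    omega
  · exfalso
    have : (x - 1) * (2 * K) ≤ (2 * L - 2) * (2 * K) := mul_mono_r (by omega)
    linarith
  -- (B1, _)
  · exfalso; linarith [Nat.zero_le (x * (2 * K))]
  · exfalso
    have ea : (y - 1) * (2 * K) = 2 * ((y - 1) * K) := by ring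
    have eb : x * (2 * K) = 2 * (x * K) := by ring
    rw [ea, eb] at h
    set A := (y - 1) * K
    set B := x * K
    omega
  · obtain ⟨he1, he2⟩ := twoM_inj (M := 2 * K) (by omega) (by omega)
      (show x * (2 * K) + (2 * r + 1) = y * (2 * K) + (2 * s + 1) by linarith)
    exact vert_ext K L (by omega) (by omega)
  · exfalso
    have : x * (2 * K) ≤ (2 * L - 2) * (2 * K) := mul_mono_r (by omega)
    linarith
  -- (B2, _)
  · exfalso
    have : 1 * 1 ≤ (2 * L - 1) * (2 * K) := Nat.mul_le_mul (by omega) (by omega)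
    linarith
  · exfalso
    have : (y - 1) * (2 * K) ≤ (2 * L - 2) * (2 * K) := mul_mono_r (by omega)
    linarith
  · exfalso
    have : y * (2 * K) ≤ (2 * L - 2) * (2 * K) := mul_mono_r (by omega)
    linarith
  · exact vert_ext K L (by omega) (by omega)

lemma T1_cross (v w : Vert K L) (hadj : Adj K L v w) (hv : confA K L v = true)
    (hw : confB K L w = true) : T1 K L v ≤ T1 K L w := by
  have hK := Kpos K; have hL := Lpos L
  have hjv := jv_lt K L v; have hjw := jv_lt K L w
  have k1 := kit1 K L; have k2 := kit2 K L
  have hva : v.1.2.val % 3 = 0 := (confA_iff K L v).1 hv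
  have hwb : w.1.2.val % 3 = 1 := (confB_iff K L w).1 hw
  have habv : confA K L v ≠ confB K L v := fun h => notAB K L v ⟨hv, h ▸ hv⟩
  have habw : confA K L w ≠ confB K L w := fun h => notAB K L w ⟨h.symm ▸ hw, hw⟩
  -- normalize the adjacency relation
  have hrel : (v.1.1.val = w.1.1.val ∧ v.1.2.val = w.1.2.val + 2) ∨
      (v.1.1.val = w.1.1.val ∧ v.1.2.val = 0 ∧ w.1.2.val = 6 * L - 2) ∨
      (w.1.2.val = v.1.2.val + 1) := by
    rcases adj_classify K L hadj with ⟨hi, hj | hj⟩ | ⟨hi, hj | hj⟩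
    · exfalso
      rw [hj, mod3_of_mod6L] at hwb
      omega
    · rcases mod_two_cases (show w.1.2.val + 2 < 2 * (6 * L) by omega) with hm | ⟨hge, hm⟩
      · exact Or.inl ⟨hi.symm, by omega⟩
      · right; left
        refine ⟨hi.symm, by omega, by omega⟩
    · right; right
      rw [hj, Nat.mod_eq_of_lt (by omega)]
    · exfalso
      rw [hj, mod3_of_mod6L] at hva
      omega
  rcases T1_desc K L v habv with ⟨r, hr, hj, hi, hT⟩ | ⟨x, r, hx1, hx2, hr, hj, hi, hT⟩ |
    ⟨x, r, hx, hr, hj, hi, hT⟩ | ⟨r, hr, hj, hi, hT⟩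
  · -- v in column 0
    rcases T1_desc K L w habw with ⟨s, hs, hj', hi', hT'⟩ | ⟨y, s, hy1, hy2, hs, hj', hi', hT'⟩ |
      ⟨y, s, hy, hs, hj', hi', hT'⟩ | ⟨s, hs, hj', hi', hT'⟩
    · omega
    · omega
    · rw [hT, hT']; linarith [Nat.zero_le (y * (2 * K))]
    · rw [hT, hT']; linarith [Nat.zero_le ((2 * L - 1) * (2 * K))]
  · -- v at column 3x, x ≥ 1
    rcases T1_desc K L w habw with ⟨s, hs, hj', hi', hT'⟩ | ⟨y, s, hy1, hy2, hs, hj', hi', hT'⟩ |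
      ⟨y, s, hy, hs, hj', hi', hT'⟩ | ⟨s, hs, hj', hi', hT'⟩
    · omega
    · omega
    · -- w = B1 at column 3y+1
      rw [hT, hT']
      rcases hrel with ⟨hie, hje⟩ | ⟨-, hje, -⟩ | hje
      · -- same row: x = y + 1, r = s
        have hxy : x = y + 1 := by omega
        have hrs : r = s := by omega
        subst hxy hrs
        have : (y + 1 - 1) * (2 * K) = y * (2 * K) := by norm_num
        linarith
      · omega
      · -- diagonal: y = x
        have hxy : y * (2 * K) = x * (2 * K) := by
          have : y = x := by omega
          rw [this]
        have e : (x - 1) * (2 * K) + 1 * (2 * K) = x * (2 * K) := by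
          have h := add_mul (x - 1) 1 (2 * K)
          rw [show (x - 1) + 1 = x by omega] at h
          omega
        linarith
    · -- w = B2
      rw [hT, hT']
      have : (x - 1) * (2 * K) ≤ (2 * L - 2) * (2 * K) := mul_mono_r (by omega)
      linarith
  · omega
  · omega

end Case1

section Case1b

lemma zval_sub2 (a : ZMod (6 * L)) :
    (a - 2).val = (a.val + (6 * L - 2)) % (6 * L) := by
  have hL := Lpos L
  have h2 : ((6 * L - 2 : ℕ) : ZMod (6 * L)) + ((2 : ℕ) : ZMod (6 * L))
      = ((6 * L : ℕ) : ZMod (6 * L)) := by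
    rw [← Nat.cast_add]
    congr 1
    omega
  rw [ZMod.natCast_self] at h2
  have h3 : ((6 * L - 2 : ℕ) : ZMod (6 * L)) = -((2 : ℕ) : ZMod (6 * L)) :=
    eq_neg_of_add_eq_zero_left h2
  have h1 : a - 2 = a + ((6 * L - 2 : ℕ) : ZMod (6 * L)) := by
    rw [h3]
    push_cast
    ring
  rw [h1, ZMod.val_add, ZMod.val_natCast, Nat.mod_eq_of_lt (show 6 * L - 2 < 6 * L by omega)]

/-- The same-row partner of an `a`-site: shift `j` by `-2`. -/
def partner1 : Vert K L → Vert K L := fun v =>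
  ⟨(v.1.1, v.1.2 - 2), by
    have hp := v_parity K L v
    have hjv := jv_lt K L v
    have hL := Lpos L
    show (v.1.1.val + (v.1.2 - 2).val) % 2 = 0
    rw [zval_sub2]
    rcases mod_two_cases (show v.1.2.val + (6 * L - 2) < 2 * (6 * L) by omega) with
      hm | ⟨h1, hm⟩ <;> rw [hm] <;> omega⟩

lemma partner1_i (v : Vert K L) : (partner1 K L v).1.1 = v.1.1 := rfl

lemma partner1_j (v : Vert K L) :
    (partner1 K L v).1.2.val = (v.1.2.val + (6 * L - 2)) % (6 * L) := zval_sub2 L v.1.2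

lemma partner1_B (v : Vert K L) (hv : confA K L v = true) :
    confB K L (partner1 K L v) = true := by
  have hjv := jv_lt K L v
  have hL := Lpos L
  rw [confA_iff] at hv
  rw [confB_iff, partner1_j, mod3_of_mod6L]
  omega

lemma partner1_inj (v w : Vert K L) (h : partner1 K L v = partner1 K L w) : v = w := by
  have h1 : v.1.1 = w.1.1 := congrArg (fun u => u.1.1) h
  have h2 : v.1.2 - 2 = w.1.2 - 2 := congrArg (fun u => u.1.2) h
  refine Subtype.ext (Prod.ext h1 ?_)
  have h3 := congrArg (fun z => z + (2 : ZMod (6 * L))) h2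
  simpa using h3

/-- Value of the schedule on the partner of an occupied `a`-site. -/
lemma T1_partner (v : Vert K L) (hv : confA K L v = true) :
    (v.1.2.val = 0 ∧ T1 K L (partner1 K L v) = K + (2 * L - 1) * (2 * K) + v.1.1.val / 2) ∨
    (3 ≤ v.1.2.val ∧ T1 K L (partner1 K L v) = T1 K L v + 1) := by
  have hjv := jv_lt K L v; have hiv := iv_lt K L v
  have hK := Kpos K; have hL := Lpos L
  have hva : v.1.2.val % 3 = 0 := (confA_iff K L v).1 hv
  have hpj := partner1_j K L v
  have hpi : (partner1 K L v).1.1.val = v.1.1.val := by rw [partner1_i]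
  by_cases h0 : v.1.2.val = 0
  · left
    refine ⟨h0, ?_⟩
    have hj' : (partner1 K L v).1.2.val = 6 * L - 2 := by
      rw [hpj, h0, Nat.zero_add, Nat.mod_eq_of_lt (by omega)]
    have hTp : T1 K L (partner1 K L v) = K + (2 * L - 1) * (2 * K)
        + (partner1 K L v).1.1.val / 2 := by
      simp only [T1]
      rw [if_neg (by omega), if_pos (by omega), if_pos (by omega)]
    rw [hTp, hpi]
  · right
    have h3 : 3 ≤ v.1.2.val := by omega
    refine ⟨h3, ?_⟩
    have hj' : (partner1 K L v).1.2.val = v.1.2.val - 2 := by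
      rw [hpj, Nat.mod_eq_sub_mod (by omega), Nat.mod_eq_of_lt (by omega)]
      omega
    have hx' : (partner1 K L v).1.2.val / 3 = v.1.2.val / 3 - 1 := by omega
    have hm' : (partner1 K L v).1.2.val % 3 = 1 := by omega
    have hTv : T1 K L v = K + (v.1.2.val / 3 - 1) * (2 * K) + 2 * (v.1.1.val / 2) := by
      simp only [T1]
      rw [if_pos hva, if_neg (by omega)]
    have hTp : T1 K L (partner1 K L v)
        = K + (v.1.2.val / 3 - 1) * (2 * K) + 2 * (v.1.1.val / 2) + 1 := by
      simp only [T1]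
      rw [if_neg (by omega), if_pos hm', if_neg (by omega), hpi, hx']
    rw [hTv, hTp]

lemma bad1_card (t : ℕ) :
    ((univ : Finset (Vert K L)).filter fun v =>
      confA K L v = true ∧ T1 K L v < t ∧ t ≤ T1 K L (partner1 K L v)).card ≤ K + 1 := by
  classical
  set S0 : Finset (Vert K L) := (univ.filter fun v => v.1.2.val = 0) with hS0
  set S1 : Finset (Vert K L) := (univ.filter fun v =>
    confA K L v = true ∧ 3 ≤ v.1.2.val ∧ T1 K L v + 1 = t) with hS1
  have hsub : (univ.filter fun v =>
      confA K L v = true ∧ T1 K L v < t ∧ t ≤ T1 K L (partner1 K L v)) ⊆ S0 ∪ S1 := by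
    intro v hv
    simp only [Finset.mem_filter, Finset.mem_univ, true_and] at hv
    obtain ⟨hA, h1, h2⟩ := hv
    rcases T1_partner K L v hA with ⟨hj0, -⟩ | ⟨hj3, hTp⟩
    · exact Finset.mem_union_left _ (by
        simp only [hS0, Finset.mem_filter, Finset.mem_univ, true_and]
        exact hj0)
    · exact Finset.mem_union_right _ (by
        simp only [hS1, Finset.mem_filter, Finset.mem_univ, true_and]
        exact ⟨hA, hj3, by omega⟩)
  have hcard0 : S0.card ≤ K := by
    have h : S0.card ≤ (Finset.range K).card := by
      apply Finset.card_le_card_of_injOn (fun (v : Vert K L) => v.1.1.val / 2)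
      · intro v hv
        simp only [Finset.mem_coe, Finset.mem_range]
        have := iv_lt K L v
        omega
      · intro v hv w hw he
        simp only [hS0, Finset.mem_coe, Finset.mem_filter, Finset.mem_univ, true_and] at hv hw
        simp only at he
        have hp1 := v_parity K L v; have hp2 := v_parity K L w
        exact vert_ext K L (by omega) (by omega)
    simpa using h
  have hcard1 : S1.card ≤ 1 := by
    apply Finset.card_le_one.2
    intro v hv w hw
    simp only [hS1, Finset.mem_filter, Finset.mem_univ, true_and] at hv hw
    refine T1_inj K L v w ?_ ?_ (by omega)
    · exact fun h => notAB K L v ⟨hv.1, h ▸ hv.1⟩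
    · exact fun h => notAB K L w ⟨hw.1, h ▸ hw.1⟩
  calc (univ.filter fun v =>
      confA K L v = true ∧ T1 K L v < t ∧ t ≤ T1 K L (partner1 K L v)).card
      ≤ (S0 ∪ S1).card := Finset.card_le_card hsub
    _ ≤ S0.card + S1.card := Finset.card_union_le _ _
    _ ≤ K + 1 := by omega

end Case1b

section Case1c

omit [NeZero K] [NeZero L] in
lemma squeeze1 {A r : ℕ} (h : K + A + 2 * r < K + 1) : A = 0 ∧ r = 0 := by omega

omit [NeZero K] [NeZero L] in
lemma squeeze2 {A r : ℕ} (h : K + A + 2 * r + 1 < K + 1) : False := by omega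

omit [NeZero K] [NeZero L] in
lemma squeeze3 {A r : ℕ} (hA : 1 ≤ A) (h : K + A + r < K + 1) : False := by omega

def D1 : Finset (Vert K L) :=
  univ.filter fun v => confA K L v = true ∧ T1 K L v < K + 1

lemma D1_spec (v : Vert K L) :
    Om K L (T1 K L) (K + 1) v = true ↔ (confA K L v = true ∧ v ∉ D1 K L) := by
  classical
  unfold Om
  by_cases hT : T1 K L v < K + 1
  · rw [if_pos hT]
    constructor
    · intro hB
      exact absurd hT (by have := T1_b_lb K L v hB; omega)
    · rintro ⟨hA, hD⟩
      exfalso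
      apply hD
      simp only [D1, Finset.mem_filter, Finset.mem_univ, true_and]
      exact ⟨hA, hT⟩
  · rw [if_neg hT]
    constructor
    · intro hA
      refine ⟨hA, fun hD => ?_⟩
      simp only [D1, Finset.mem_filter, Finset.mem_univ, true_and] at hD
      exact hT hD.2
    · exact fun h => h.1

lemma mem_D1 (v : Vert K L) :
    v ∈ D1 K L ↔ (v.1.2.val = 0 ∨ (v.1.1.val = 1 ∧ v.1.2.val = 3)) := by
  have hK := Kpos K; have hL := Lpos L
  have hiv := iv_lt K L v; have hjv := jv_lt K L v
  have hpar := v_parity K L v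
  simp only [D1, Finset.mem_filter, Finset.mem_univ, true_and]
  constructor
  · rintro ⟨hA, hT⟩
    have hab : confA K L v ≠ confB K L v := fun h => notAB K L v ⟨hA, h ▸ hA⟩
    rcases T1_desc K L v hab with ⟨r, hr, hj, hi, hTv⟩ | ⟨x, r, hx1, hx2, hr, hj, hi, hTv⟩ |
      ⟨x, r, hx, hr, hj, hi, hTv⟩ | ⟨r, hr, hj, hi, hTv⟩
    · exact Or.inl hj
    · right
      rw [hTv] at hT
      obtain ⟨hA0, hr0⟩ := squeeze1 K hT
      have hx0 : x = 1 := by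
        rcases Nat.mul_eq_zero.1 hA0 with h | h <;> omega
      omega
    · exact absurd (hTv ▸ hT) (fun h => squeeze2 K h)
    · refine absurd (hTv ▸ hT) (fun h => squeeze3 K ?_ h)
      calc 1 = 1 * 1 := by omega
        _ ≤ (2 * L - 1) * (2 * K) := Nat.mul_le_mul (by omega) (by omega)
  · intro h
    rcases h with h0 | ⟨hi1, hj3⟩
    · have hA : confA K L v = true := by rw [confA_iff]; omega
      refine ⟨hA, ?_⟩
      have : T1 K L v = v.1.1.val / 2 := by
        simp only [T1]
        rw [if_pos (by omega), if_pos (by omega)]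
      omega
    · have hA : confA K L v = true := by rw [confA_iff]; omega
      refine ⟨hA, ?_⟩
      have : T1 K L v = K + (3 / 3 - 1) * (2 * K) + 2 * (1 / 2) := by
        simp only [T1]
        rw [if_pos (by omega), if_neg (by omega), hi1, hj3]
      rw [this]
      norm_num

lemma D1_card (hK2 : 2 ≤ K) : (D1 K L).card = K + 1 := by
  classical
  have hK := Kpos K; have hL := Lpos L
  set f : ℕ → Vert K L := fun s =>
    ⟨(((2 * s : ℕ) : ZMod (2 * K)), (0 : ZMod (6 * L))), by
      rw [ZMod.val_natCast, ZMod.val_zero, Nat.mul_mod_mul_left]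
      omega⟩ with hf
  set v13 : Vert K L :=
    ⟨(((1 : ℕ) : ZMod (2 * K)), ((3 : ℕ) : ZMod (6 * L))), by
      rw [ZMod.val_natCast, ZMod.val_natCast,
        Nat.mod_eq_of_lt (show 1 < 2 * K by omega),
        Nat.mod_eq_of_lt (show 3 < 6 * L by omega)]⟩ with hv13
  have hfval1 : ∀ s, s < K → (f s).1.1.val = 2 * s := by
    intro s hs
    show ((2 * s : ℕ) : ZMod (2 * K)).val = 2 * s
    rw [ZMod.val_natCast, Nat.mod_eq_of_lt (by omega)]
  have hfval2 : ∀ s, (f s).1.2.val = 0 := by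
    intro s
    show (0 : ZMod (6 * L)).val = 0
    simp
  have hv13i : v13.1.1.val = 1 := by
    show ((1 : ℕ) : ZMod (2 * K)).val = 1
    rw [ZMod.val_natCast, Nat.mod_eq_of_lt (by omega)]
  have hv13j : v13.1.2.val = 3 := by
    show ((3 : ℕ) : ZMod (6 * L)).val = 3
    rw [ZMod.val_natCast, Nat.mod_eq_of_lt (by omega)]
  have himg : D1 K L = (Finset.range K).image f ∪ {v13} := by
    ext v
    rw [mem_D1, Finset.mem_union, Finset.mem_image, Finset.mem_singleton]
    constructor
    · rintro (h0 | ⟨h1, h3⟩)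
      · left
        have hpar := v_parity K L v
        have hiv := iv_lt K L v
        refine ⟨v.1.1.val / 2, Finset.mem_range.2 (by omega), ?_⟩
        refine vert_ext K L ?_ ?_
        · rw [hfval1 _ (by omega)]
          omega
        · rw [hfval2]
          omega
      · right
        exact (vert_ext K L (by omega) (by omega)).symm
    · rintro (⟨s, hs, rfl⟩ | rfl)
      · exact Or.inl (hfval2 s)
      · exact Or.inr ⟨hv13i, hv13j⟩
  rw [himg]
  rw [Finset.card_union_of_disjoint (by
    rw [Finset.disjoint_singleton_right]
    intro hmem
    obtain ⟨s, hs, heq⟩ := Finset.mem_image.1 hmem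
    have := hfval2 s
    rw [heq, hv13j] at this
    omega)]
  rw [Finset.card_image_of_injOn (fun s hs t ht he => by
    have h1 := hfval1 s (Finset.mem_range.1 hs)
    have h2 := hfval1 t (Finset.mem_range.1 ht)
    rw [he] at h1
    omega), Finset.card_range, Finset.card_singleton]

end Case1c

/-- The reference path for the case `K ≤ 2L` (vertical sweep). -/
def path1 : HCPath K L (confA K L) (confB K L) where
  n := 4 * K * L
  ω := fun t => Om K L (T1 K L) t.val
  first := by
    show Om K L (T1 K L) (0 : Fin (4 * K * L + 1)).val = confA K L
    rw [Fin.val_zero]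
    exact Om_zero K L _
  last := by
    show Om K L (T1 K L) (Fin.last (4 * K * L)).val = confB K L
    rw [Fin.val_last]
    exact Om_last K L _ _ (fun v h => T1_lt K L v h)
  hc := fun i => Om_hc K L _ _ (T1_cross K L)
  step := fun i => by
    have h := Om_step K L (T1 K L) i.val (T1_inj K L)
    have h1 : (i.castSucc).val = i.val := rfl
    have h2 : (i.succ).val = i.val + 1 := rfl
    simpa [h1, h2] using h

lemma case1_height (hK : 2 ≤ K) (hKL : K ≤ 2 * L) :
    pathHeight K L (path1 K L) - energy K L (confA K L) = ((min K (2 * L) : ℕ) : ℤ) + 1 := by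
  have hKp := Kpos K; have hLp := Lpos L
  have hmin : min K (2 * L) = K := min_eq_left hKL
  set Na := nParticles K L (confA K L) with hNa
  have hub : ∀ t : ℕ,
      (Na : ℤ) ≤ (nParticles K L (Om K L (T1 K L) t) : ℤ) + (K + 1) := by
    intro t
    have h := Om_count_lower K L (T1 K L) t (K + 1) (partner1 K L) (partner1_B K L)
      (partner1_inj K L) (bad1_card K L t)
    exact_mod_cast h
  have hts : (nParticles K L (Om K L (T1 K L) (K + 1)) : ℤ) = (Na : ℤ) - (K + 1) := by
    have h := Om_count_at K L (T1 K L) (K + 1) (D1 K L) (D1_spec K L)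
      (fun v hv => (Finset.mem_filter.1 hv).2.1)
    rw [D1_card K L hK] at h
    omega
  have hlt : K + 1 < 4 * K * L + 1 := by
    have h4 : 4 * K * 1 ≤ 4 * K * L := Nat.mul_le_mul_left _ hLp
    omega
  have hH : pathHeight K L (path1 K L) = -(Na : ℤ) + (K + 1) := by
    unfold pathHeight
    apply le_antisymm
    · apply Finset.sup'_le
      intro i _
      show energy K L (Om K L (T1 K L) i.val) ≤ _
      unfold energy
      have := hub i.val
      omega
    · refine le_trans ?_ (Finset.le_sup' _ (Finset.mem_univ (⟨K + 1, hlt⟩ : Fin (4 * K * L + 1))))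
      show _ ≤ energy K L (Om K L (T1 K L) (K + 1))
      unfold energy
      omega
  rw [hH, hmin]
  unfold energy
  push_cast
  ring

section Case2

/-- Schedule for the horizontal sweep (used when `2L < K`). -/
def T2 : Vert K L → ℕ := fun v =>
  if v.1.2.val % 3 = 0 then
    (if v.1.1.val ≤ 1 then v.1.2.val / 3
     else (v.1.1.val - 1) * (2 * L) + 2 * (v.1.2.val / 3 / 2))
  else if v.1.2.val % 3 = 1 then
    (if v.1.1.val = 0 then (2 * K - 1) * (2 * L) + (L + v.1.2.val / 3 / 2)
     else if v.1.1.val = 2 * K - 1 then (2 * K - 1) * (2 * L) + v.1.2.val / 3 / 2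
     else v.1.1.val * (2 * L) + (2 * (v.1.2.val / 3 / 2) + 1))
  else 4 * K * L

/-- Structure of the schedule `T2` on occupied sites. -/
lemma T2_desc (v : Vert K L) (h : confA K L v ≠ confB K L v) :
    (∃ x, x < 2 * L ∧ v.1.1.val = x % 2 ∧ v.1.2.val = 3 * x ∧ T2 K L v = x) ∨
    (∃ i q, 2 ≤ i ∧ i ≤ 2 * K - 1 ∧ q < L ∧ v.1.1.val = i ∧
      v.1.2.val = 3 * (2 * q + i % 2) ∧ T2 K L v = (i - 1) * (2 * L) + 2 * q) ∨
    (∃ i q, 1 ≤ i ∧ i ≤ 2 * K - 2 ∧ q < L ∧ v.1.1.val = i ∧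
      v.1.2.val = 3 * (2 * q + (i + 1) % 2) + 1 ∧ T2 K L v = i * (2 * L) + (2 * q + 1)) ∨
    (∃ q, q < L ∧ v.1.1.val = 2 * K - 1 ∧ v.1.2.val = 3 * (2 * q) + 1 ∧
      T2 K L v = (2 * K - 1) * (2 * L) + q) ∨
    (∃ q, q < L ∧ v.1.1.val = 0 ∧ v.1.2.val = 3 * (2 * q + 1) + 1 ∧
      T2 K L v = (2 * K - 1) * (2 * L) + (L + q)) := by
  have hK := Kpos K; have hL := Lpos L
  have hiv := iv_lt K L v; have hjv := jv_lt K L v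
  have hpar := v_parity K L v
  rcases ab_site K L h with h3 | h3
  · by_cases hi : v.1.1.val ≤ 1
    · left
      refine ⟨v.1.2.val / 3, by omega, by omega, by omega, ?_⟩
      simp only [T2]
      rw [if_pos h3, if_pos hi]
    · right; left
      refine ⟨v.1.1.val, v.1.2.val / 3 / 2, by omega, by omega, by omega, rfl, by omega, ?_⟩
      simp only [T2]
      rw [if_pos h3, if_neg hi]
  · by_cases hi0 : v.1.1.val = 0
    · right; right; right; right
      refine ⟨v.1.2.val / 3 / 2, by omega, hi0, by omega, ?_⟩
      simp only [T2]
      rw [if_neg (by omega), if_pos h3, if_pos hi0]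
    · by_cases hitop : v.1.1.val = 2 * K - 1
      · right; right; right; left
        refine ⟨v.1.2.val / 3 / 2, by omega, hitop, by omega, ?_⟩
        simp only [T2]
        rw [if_neg (by omega), if_pos h3, if_neg hi0, if_pos hitop]
      · right; right; left
        refine ⟨v.1.1.val, v.1.2.val / 3 / 2, by omega, by omega, by omega, rfl, by omega, ?_⟩
        simp only [T2]
        rw [if_neg (by omega), if_pos h3, if_neg hi0, if_neg hitop]

lemma kit3 : (2 * K - 2) * (2 * L) + 2 * (2 * L) = 2 * K * (2 * L) := by
  have h := add_mul (2 * K - 2) 2 (2 * L)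
  rw [show (2 * K - 2) + 2 = 2 * K by have := Kpos K; omega] at h
  omega

lemma kit4 : (2 * K - 1) * (2 * L) + 1 * (2 * L) = 2 * K * (2 * L) := by
  have h := add_mul (2 * K - 1) 1 (2 * L)
  rw [show (2 * K - 1) + 1 = 2 * K by have := Kpos K; omega] at h
  omega

lemma T2_lt (v : Vert K L) (h : confA K L v ≠ confB K L v) : T2 K L v < 4 * K * L := by
  have hK := Kpos K; have hL := Lpos L
  have k3 := kit3 K L; have k4 := kit4 K L
  have e4 : 2 * K * (2 * L) = 4 * K * L := by ring
  rcases T2_desc K L v h with ⟨x, hx, -, -, hT⟩ | ⟨i, q, hi1, hi2, hq, -, -, hT⟩ |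
    ⟨i, q, hi1, hi2, hq, -, -, hT⟩ | ⟨q, hq, -, -, hT⟩ | ⟨q, hq, -, -, hT⟩
  · have : 1 * (2 * L) ≤ 2 * K * (2 * L) := mul_mono_r (by omega)
    linarith
  · have : (i - 1) * (2 * L) ≤ (2 * K - 2) * (2 * L) := mul_mono_r (by omega)
    linarith
  · have : i * (2 * L) ≤ (2 * K - 2) * (2 * L) := mul_mono_r (by omega)
    linarith
  · linarith
  · linarith

lemma T2_b_lb (hK2 : 2 ≤ K) (v : Vert K L) (hv : confB K L v = true) :
    2 * L + 1 ≤ T2 K L v := by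
  have hK := Kpos K; have hL := Lpos L
  have hab : confA K L v ≠ confB K L v := fun h => notAB K L v ⟨h ▸ hv, hv⟩
  have hj : v.1.2.val % 3 = 1 := (confB_iff K L v).1 hv
  rcases T2_desc K L v hab with ⟨x, hx, -, hjv, hT⟩ | ⟨i, q, hi1, hi2, hq, -, hjv, hT⟩ |
    ⟨i, q, hi1, hi2, hq, -, hjv, hT⟩ | ⟨q, hq, -, hjv, hT⟩ | ⟨q, hq, -, hjv, hT⟩
  · omega
  · omega
  · rw [hT]
    have : 1 * (2 * L) ≤ i * (2 * L) := mul_mono_r (by omega)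
    linarith
  · rw [hT]
    have : 3 * (2 * L) ≤ (2 * K - 1) * (2 * L) := mul_mono_r (by omega)
    linarith
  · rw [hT]
    have : 3 * (2 * L) ≤ (2 * K - 1) * (2 * L) := mul_mono_r (by omega)
    linarith

lemma T2_inj (v w : Vert K L) (hv : confA K L v ≠ confB K L v)
    (hw : confA K L w ≠ confB K L w) (h : T2 K L v = T2 K L w) : v = w := by
  have hK := Kpos K; have hL := Lpos L
  rcases T2_desc K L v hv with ⟨x, hx, hi, hj, hT⟩ | ⟨i, q, hi1, hi2, hq, hi, hj, hT⟩ |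
    ⟨i, q, hi1, hi2, hq, hi, hj, hT⟩ | ⟨q, hq, hi, hj, hT⟩ | ⟨q, hq, hi, hj, hT⟩ <;>
  rcases T2_desc K L w hw with ⟨x', hx', hi', hj', hT'⟩ | ⟨i', q', hi1', hi2', hq', hi', hj', hT'⟩ |
    ⟨i', q', hi1', hi2', hq', hi', hj', hT'⟩ | ⟨q', hq', hi', hj', hT'⟩ | ⟨q', hq', hi', hj', hT'⟩ <;>
  rw [hT, hT'] at h
  -- (Alo, _)
  · exact vert_ext K L (by omega) (by omega)
  · exfalso
    have : 1 * (2 * L) ≤ (i' - 1) * (2 * L) := mul_mono_r (by omega)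
    linarith
  · exfalso
    have : 1 * (2 * L) ≤ i' * (2 * L) := mul_mono_r (by omega)
    linarith
  · exfalso
    have : 1 * (2 * L) ≤ (2 * K - 1) * (2 * L) := mul_mono_r (by omega)
    linarith
  · exfalso
    have : 1 * (2 * L) ≤ (2 * K - 1) * (2 * L) := mul_mono_r (by omega)
    linarith
  -- (Ahi, _)
  · exfalso
    have : 1 * (2 * L) ≤ (i - 1) * (2 * L) := mul_mono_r (by omega)
    linarith
  · obtain ⟨h1, h2⟩ := twoM_inj (M := 2 * L) (by omega) (by omega) h
    exact vert_ext K L (by omega) (by omega)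
  · exfalso
    obtain ⟨h1, h2⟩ := twoM_inj (M := 2 * L) (by omega) (by omega) h
    omega
  · exfalso
    obtain ⟨h1, h2⟩ := twoM_inj (M := 2 * L) (by omega) (by omega) h
    omega
  · exfalso
    obtain ⟨h1, h2⟩ := twoM_inj (M := 2 * L) (by omega) (by omega) h
    omega
  -- (Bmid, _)
  · exfalso
    have : 1 * (2 * L) ≤ i * (2 * L) := mul_mono_r (by omega)
    linarith
  · exfalso
    obtain ⟨h1, h2⟩ := twoM_inj (M := 2 * L) (by omega) (by omega) h
    omega
  · obtain ⟨h1, h2⟩ := twoM_inj (M := 2 * L) (by omega) (by omega) h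
    exact vert_ext K L (by omega) (by omega)
  · exfalso
    obtain ⟨h1, h2⟩ := twoM_inj (M := 2 * L) (by omega) (by omega) h
    omega
  · exfalso
    obtain ⟨h1, h2⟩ := twoM_inj (M := 2 * L) (by omega) (by omega) h
    omega
  -- (Btop, _)
  · exfalso
    have : 1 * (2 * L) ≤ (2 * K - 1) * (2 * L) := mul_mono_r (by omega)
    linarith
  · exfalso
    obtain ⟨h1, h2⟩ := twoM_inj (M := 2 * L) (by omega) (by omega) h
    omega
  · exfalso
    obtain ⟨h1, h2⟩ := twoM_inj (M := 2 * L) (by omega) (by omega) h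
    omega
  · obtain ⟨h1, h2⟩ := twoM_inj (M := 2 * L) (by omega) (by omega) h
    exact vert_ext K L (by omega) (by omega)
  · exfalso
    obtain ⟨h1, h2⟩ := twoM_inj (M := 2 * L) (by omega) (by omega) h
    omega
  -- (Bbot, _)
  · exfalso
    have : 1 * (2 * L) ≤ (2 * K - 1) * (2 * L) := mul_mono_r (by omega)
    linarith
  · exfalso
    obtain ⟨h1, h2⟩ := twoM_inj (M := 2 * L) (by omega) (by omega) h
    omega
  · exfalso
    obtain ⟨h1, h2⟩ := twoM_inj (M := 2 * L) (by omega) (by omega) h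
    omega
  · exfalso
    obtain ⟨h1, h2⟩ := twoM_inj (M := 2 * L) (by omega) (by omega) h
    omega
  · obtain ⟨h1, h2⟩ := twoM_inj (M := 2 * L) (by omega) (by omega) h
    exact vert_ext K L (by omega) (by omega)

end Case2

section Case2b

lemma kit5 : (2 * K - 2) * (2 * L) + 1 * (2 * L) = (2 * K - 1) * (2 * L) := by
  have h := add_mul (2 * K - 2) 1 (2 * L)
  rw [show (2 * K - 2) + 1 = 2 * K - 1 by have := Kpos K; omega] at h
  omega

lemma T2_cross (hK2 : 2 ≤ K) (v w : Vert K L) (hadj : Adj K L v w)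
    (hv : confA K L v = true) (hw : confB K L w = true) : T2 K L v ≤ T2 K L w := by
  have hK := Kpos K; have hL := Lpos L
  have hiv := iv_lt K L v; have hiw := iv_lt K L w
  have hjv := jv_lt K L v; have hjw := jv_lt K L w
  have k5 := kit5 K L
  have hva : v.1.2.val % 3 = 0 := (confA_iff K L v).1 hv
  have hwb : w.1.2.val % 3 = 1 := (confB_iff K L w).1 hw
  have habv : confA K L v ≠ confB K L v := fun h => notAB K L v ⟨hv, h ▸ hv⟩
  have habw : confA K L w ≠ confB K L w := fun h => notAB K L w ⟨h.symm ▸ hw, hw⟩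
  have hrel : (v.1.1.val = w.1.1.val) ∨
      (w.1.2.val = v.1.2.val + 1 ∧
        (w.1.1.val = v.1.1.val + 1 ∨ v.1.1.val = w.1.1.val + 1 ∨
         (v.1.1.val = 2 * K - 1 ∧ w.1.1.val = 0) ∨
         (w.1.1.val = 2 * K - 1 ∧ v.1.1.val = 0))) := by
    rcases adj_classify K L hadj with ⟨hi, hj | hj⟩ | ⟨hi, hj | hj⟩
    · exfalso
      rw [hj, mod3_of_mod6L] at hwb
      omega
    · exact Or.inl hi.symm
    · right
      refine ⟨by rw [hj, Nat.mod_eq_of_lt (by omega)], ?_⟩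
      rcases hi with hi | hi
      · rcases mod_two_cases (show v.1.1.val + 1 < 2 * (2 * K) by omega) with hm | ⟨hge, hm⟩
        · exact Or.inl (by omega)
        · exact Or.inr (Or.inr (Or.inl (by omega)))
      · rcases mod_two_cases (show w.1.1.val + 1 < 2 * (2 * K) by omega) with hm | ⟨hge, hm⟩
        · exact Or.inr (Or.inl (by omega))
        · exact Or.inr (Or.inr (Or.inr (by omega)))
    · exfalso
      rw [hj, mod3_of_mod6L] at hva
      omega
  rcases T2_desc K L v habv with ⟨x, hx, hi, hj, hT⟩ | ⟨i, q, hi1, hi2, hq, hi, hj, hT⟩ |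
    ⟨i, q, hi1, hi2, hq, hi, hj, hT⟩ | ⟨q, hq, hi, hj, hT⟩ | ⟨q, hq, hi, hj, hT⟩
  · -- v in rows 0/1
    rcases T2_desc K L w habw with ⟨x', hx', hi', hj', hT'⟩ | ⟨i', q', hi1', hi2', hq', hi', hj', hT'⟩ |
      ⟨i', q', hi1', hi2', hq', hi', hj', hT'⟩ | ⟨q', hq', hi', hj', hT'⟩ | ⟨q', hq', hi', hj', hT'⟩
    · omega
    · omega
    · rw [hT, hT']
      have : 1 * (2 * L) ≤ i' * (2 * L) := mul_mono_r (by omega)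
      linarith
    · rw [hT, hT']
      have : 1 * (2 * L) ≤ (2 * K - 1) * (2 * L) := mul_mono_r (by omega)
      linarith
    · rw [hT, hT']
      have : 1 * (2 * L) ≤ (2 * K - 1) * (2 * L) := mul_mono_r (by omega)
      linarith
  · -- v in rows ≥ 2
    rcases T2_desc K L w habw with ⟨x', hx', hi', hj', hT'⟩ | ⟨i', q', hi1', hi2', hq', hi', hj', hT'⟩ |
      ⟨i', q', hi1', hi2', hq', hi', hj', hT'⟩ | ⟨q', hq', hi', hj', hT'⟩ | ⟨q', hq', hi', hj', hT'⟩
    · omega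
    · omega
    · -- w = Bmid
      rw [hT, hT']
      rcases hrel with hie | ⟨hje, hir⟩
      · -- same row: i' = i
        have e1 : (i - 1) * (2 * L) + 1 * (2 * L) = i * (2 * L) := by
          have h := add_mul (i - 1) 1 (2 * L)
          rw [show (i - 1) + 1 = i by omega] at h
          omega
        have e2 : i' * (2 * L) = i * (2 * L) := by rw [show i' = i by omega]
        linarith
      · rcases hir with h1 | h1 | h1 | h1
        · -- i' = i + 1
          have e1 : (i - 1) * (2 * L) + 2 * (2 * L) = (i + 1) * (2 * L) := by
            have h := add_mul (i - 1) 2 (2 * L)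
            rw [show (i - 1) + 2 = i + 1 by omega] at h
            omega
          have e2 : i' * (2 * L) = (i + 1) * (2 * L) := by rw [show i' = i + 1 by omega]
          linarith
        · -- i = i' + 1 : need q = q'
          have hqq : q = q' := by omega
          have e2 : (i - 1) * (2 * L) = i' * (2 * L) := by rw [show i - 1 = i' by omega]
          linarith
        · omega
        · omega
    · -- w = Btop
      rw [hT, hT']
      have : (i - 1) * (2 * L) ≤ (2 * K - 2) * (2 * L) := mul_mono_r (by omega)
      linarith
    · -- w = Bbot
      rw [hT, hT']
      have : (i - 1) * (2 * L) ≤ (2 * K - 2) * (2 * L) := mul_mono_r (by omega)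
      linarith
  · omega
  · omega
  · omega

lemma zval_sub1 (a : ZMod (2 * K)) :
    (a - 1).val = (a.val + (2 * K - 1)) % (2 * K) := by
  have hK := Kpos K
  have h2 : ((2 * K - 1 : ℕ) : ZMod (2 * K)) + ((1 : ℕ) : ZMod (2 * K))
      = ((2 * K : ℕ) : ZMod (2 * K)) := by
    rw [← Nat.cast_add]
    congr 1
    omega
  rw [ZMod.natCast_self] at h2
  have h3 : ((2 * K - 1 : ℕ) : ZMod (2 * K)) = -((1 : ℕ) : ZMod (2 * K)) :=
    eq_neg_of_add_eq_zero_left h2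
  have h1 : a - 1 = a + ((2 * K - 1 : ℕ) : ZMod (2 * K)) := by
    rw [h3]
    push_cast
    ring
  rw [h1, ZMod.val_add, ZMod.val_natCast, Nat.mod_eq_of_lt (show 2 * K - 1 < 2 * K by omega)]

lemma zval_add1 (a : ZMod (6 * L)) : (a + 1).val = (a.val + 1) % (6 * L) := by
  have hL := Lpos L
  have h1 : (1 : ZMod (6 * L)) = ((1 : ℕ) : ZMod (6 * L)) := by norm_cast
  rw [h1, ZMod.val_add, ZMod.val_natCast, Nat.mod_eq_of_lt (show 1 < 6 * L by omega)]

/-- The diagonal partner of an `a`-site for the horizontal sweep. -/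
def partner2 : Vert K L → Vert K L := fun v =>
  ⟨(v.1.1 - 1, v.1.2 + 1), by
    have hp := v_parity K L v
    have hiv := iv_lt K L v
    have hjv := jv_lt K L v
    have hK := Kpos K; have hL := Lpos L
    show ((v.1.1 - 1).val + (v.1.2 + 1).val) % 2 = 0
    rw [zval_sub1, zval_add1]
    rcases mod_two_cases (show v.1.1.val + (2 * K - 1) < 2 * (2 * K) by omega) with
      hm1 | ⟨hg1, hm1⟩ <;>
    rcases mod_two_cases (show v.1.2.val + 1 < 2 * (6 * L) by omega) with
      hm2 | ⟨hg2, hm2⟩ <;>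
    rw [hm1, hm2] <;> omega⟩

lemma partner2_B (v : Vert K L) (hv : confA K L v = true) :
    confB K L (partner2 K L v) = true := by
  have hjv := jv_lt K L v
  have hL := Lpos L
  rw [confA_iff] at hv
  rw [confB_iff]
  show (v.1.2 + 1).val % 3 = 1
  rw [zval_add1, mod3_of_mod6L]
  omega

lemma partner2_inj (v w : Vert K L) (h : partner2 K L v = partner2 K L w) : v = w := by
  have h1 : v.1.1 - 1 = w.1.1 - 1 := congrArg (fun u => u.1.1) h
  have h2 : v.1.2 + 1 = w.1.2 + 1 := congrArg (fun u => u.1.2) h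
  refine Subtype.ext (Prod.ext ?_ (add_right_cancel h2))
  have h3 := congrArg (fun z => z + (1 : ZMod (2 * K))) h1
  simpa using h3

lemma T2_partner (v : Vert K L) (hv : confA K L v = true) (h2 : 2 ≤ v.1.1.val) :
    T2 K L (partner2 K L v) = T2 K L v + 1 := by
  have hiv := iv_lt K L v; have hjv := jv_lt K L v
  have hK := Kpos K; have hL := Lpos L
  have hva : v.1.2.val % 3 = 0 := (confA_iff K L v).1 hv
  have hpi : (partner2 K L v).1.1.val = v.1.1.val - 1 := by
    show (v.1.1 - 1).val = v.1.1.val - 1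
    rw [zval_sub1, Nat.mod_eq_sub_mod (by omega), Nat.mod_eq_of_lt (by omega)]
    omega
  have hpj : (partner2 K L v).1.2.val = v.1.2.val + 1 := by
    show (v.1.2 + 1).val = v.1.2.val + 1
    rw [zval_add1, Nat.mod_eq_of_lt (by omega)]
  have hTv : T2 K L v = (v.1.1.val - 1) * (2 * L) + 2 * (v.1.2.val / 3 / 2) := by
    simp only [T2]
    rw [if_pos hva, if_neg (by omega)]
  have hTp : T2 K L (partner2 K L v)
      = (v.1.1.val - 1) * (2 * L) + (2 * (v.1.2.val / 3 / 2) + 1) := by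
    simp only [T2]
    rw [if_neg (by rw [hpj]; omega), if_pos (by rw [hpj]; omega), if_neg (by rw [hpi]; omega),
      if_neg (by rw [hpi]; omega), hpi, hpj]
    congr 2
    omega
  rw [hTv, hTp]
  linarith

lemma bad2_card (t : ℕ) :
    ((univ : Finset (Vert K L)).filter fun v =>
      confA K L v = true ∧ T2 K L v < t ∧ t ≤ T2 K L (partner2 K L v)).card ≤ 2 * L + 1 := by
  classical
  set S0 : Finset (Vert K L) :=
    (univ.filter fun v => v.1.2.val % 3 = 0 ∧ v.1.1.val ≤ 1) with hS0
  set S1 : Finset (Vert K L) := (univ.filter fun v =>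
    confA K L v = true ∧ 2 ≤ v.1.1.val ∧ T2 K L v + 1 = t) with hS1
  have hsub : (univ.filter fun v =>
      confA K L v = true ∧ T2 K L v < t ∧ t ≤ T2 K L (partner2 K L v)) ⊆ S0 ∪ S1 := by
    intro v hv
    simp only [Finset.mem_filter, Finset.mem_univ, true_and] at hv
    obtain ⟨hA, h1, h2⟩ := hv
    by_cases hrow : v.1.1.val ≤ 1
    · exact Finset.mem_union_left _ (by
        simp only [hS0, Finset.mem_filter, Finset.mem_univ, true_and]
        exact ⟨(confA_iff K L v).1 hA, hrow⟩)
    · refine Finset.mem_union_right _ (by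
        simp only [hS1, Finset.mem_filter, Finset.mem_univ, true_and]
        have := T2_partner K L v hA (by omega)
        exact ⟨hA, by omega, by omega⟩)
  have hcard0 : S0.card ≤ 2 * L := by
    have h : S0.card ≤ (Finset.range (2 * L)).card := by
      apply Finset.card_le_card_of_injOn (fun (v : Vert K L) => v.1.2.val / 3)
      · intro v hv
        simp only [Finset.mem_coe, Finset.mem_range]
        have := jv_lt K L v
        omega
      · intro v hv w hw he
        simp only [hS0, Finset.mem_coe, Finset.mem_filter, Finset.mem_univ, true_and] at hv hw
        simp only at he
        have hp1 := v_parity K L v; have hp2 := v_parity K L w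
        exact vert_ext K L (by omega) (by omega)
    simpa using h
  have hcard1 : S1.card ≤ 1 := by
    apply Finset.card_le_one.2
    intro v hv w hw
    simp only [hS1, Finset.mem_filter, Finset.mem_univ, true_and] at hv hw
    refine T2_inj K L v w ?_ ?_ (by omega)
    · exact fun h => notAB K L v ⟨hv.1, h ▸ hv.1⟩
    · exact fun h => notAB K L w ⟨hw.1, h ▸ hw.1⟩
  calc (univ.filter fun v =>
      confA K L v = true ∧ T2 K L v < t ∧ t ≤ T2 K L (partner2 K L v)).card
      ≤ (S0 ∪ S1).card := Finset.card_le_card hsub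
    _ ≤ S0.card + S1.card := Finset.card_union_le _ _
    _ ≤ 2 * L + 1 := by omega

end Case2b

section Case2c

def D2 : Finset (Vert K L) :=
  univ.filter fun v => confA K L v = true ∧ T2 K L v < 2 * L + 1

lemma D2_spec (hK2 : 2 ≤ K) (v : Vert K L) :
    Om K L (T2 K L) (2 * L + 1) v = true ↔ (confA K L v = true ∧ v ∉ D2 K L) := by
  classical
  unfold Om
  by_cases hT : T2 K L v < 2 * L + 1
  · rw [if_pos hT]
    constructor
    · intro hB
      exact absurd hT (by have := T2_b_lb K L hK2 v hB; omega)
    · rintro ⟨hA, hD⟩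
      exfalso
      apply hD
      simp only [D2, Finset.mem_filter, Finset.mem_univ, true_and]
      exact ⟨hA, hT⟩
  · rw [if_neg hT]
    constructor
    · intro hA
      refine ⟨hA, fun hD => ?_⟩
      simp only [D2, Finset.mem_filter, Finset.mem_univ, true_and] at hD
      exact hT hD.2
    · exact fun h => h.1

lemma mem_D2 (hK2 : 2 ≤ K) (v : Vert K L) :
    v ∈ D2 K L ↔ ((v.1.2.val % 3 = 0 ∧ v.1.1.val ≤ 1) ∨
      (v.1.1.val = 2 ∧ v.1.2.val = 0)) := by
  have hK := Kpos K; have hL := Lpos L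
  have hiv := iv_lt K L v; have hjv := jv_lt K L v
  have hpar := v_parity K L v
  simp only [D2, Finset.mem_filter, Finset.mem_univ, true_and]
  constructor
  · rintro ⟨hA, hT⟩
    have hab : confA K L v ≠ confB K L v := fun h => notAB K L v ⟨hA, h ▸ hA⟩
    rcases T2_desc K L v hab with ⟨x, hx, hi, hj, hTv⟩ | ⟨i, q, hi1, hi2, hq, hi, hj, hTv⟩ |
      ⟨i, q, hi1, hi2, hq, hi, hj, hTv⟩ | ⟨q, hq, hi, hj, hTv⟩ | ⟨q, hq, hi, hj, hTv⟩
    · exact Or.inl ⟨by omega, by omega⟩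
    · right
      rw [hTv] at hT
      by_cases hI : i = 2
      · have e1 : (i - 1) * (2 * L) = 1 * (2 * L) := by rw [show i - 1 = 1 by omega]
        have hq0 : q = 0 := by linarith
        refine ⟨by omega, by omega⟩
      · exfalso
        have : 2 * (2 * L) ≤ (i - 1) * (2 * L) := mul_mono_r (by omega)
        linarith
    · exfalso
      rw [hTv] at hT
      have : 1 * (2 * L) ≤ i * (2 * L) := mul_mono_r (by omega)
      linarith
    · exfalso
      rw [hTv] at hT
      have : 3 * (2 * L) ≤ (2 * K - 1) * (2 * L) := mul_mono_r (by omega)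
      linarith
    · exfalso
      rw [hTv] at hT
      have : 3 * (2 * L) ≤ (2 * K - 1) * (2 * L) := mul_mono_r (by omega)
      linarith
  · intro h
    rcases h with ⟨h0, h1⟩ | ⟨hi2, hj0⟩
    · refine ⟨by rw [confA_iff]; omega, ?_⟩
      have : T2 K L v = v.1.2.val / 3 := by
        simp only [T2]
        rw [if_pos h0, if_pos h1]
      omega
    · refine ⟨by rw [confA_iff]; omega, ?_⟩
      have hTv : T2 K L v = (2 - 1) * (2 * L) + 2 * (0 / 3 / 2) := by
        simp only [T2]
        rw [if_pos (by omega), if_neg (by omega), hi2, hj0]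
      rw [hTv]
      norm_num

lemma D2_card (hK2 : 2 ≤ K) : (D2 K L).card = 2 * L + 1 := by
  classical
  have hK := Kpos K; have hL := Lpos L
  have hdvd2 : (2 : ℕ) ∣ 6 * L := ⟨3 * L, by ring⟩
  set g : ℕ → Vert K L := fun x =>
    ⟨(((x % 2 : ℕ) : ZMod (2 * K)), ((3 * x : ℕ) : ZMod (6 * L))), by
      rw [ZMod.val_natCast, ZMod.val_natCast,
        Nat.mod_eq_of_lt (show x % 2 < 2 * K by omega)]
      have h1 := Nat.mod_mod_of_dvd (3 * x) hdvd2
      omega⟩ with hg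
  set v20 : Vert K L :=
    ⟨(((2 : ℕ) : ZMod (2 * K)), ((0 : ℕ) : ZMod (6 * L))), by
      rw [ZMod.val_natCast, ZMod.val_natCast,
        Nat.mod_eq_of_lt (show 2 < 2 * K by omega),
        Nat.mod_eq_of_lt (show 0 < 6 * L by omega)]⟩ with hv20
  have hgval1 : ∀ x, (g x).1.1.val = x % 2 := by
    intro x
    show ((x % 2 : ℕ) : ZMod (2 * K)).val = x % 2
    rw [ZMod.val_natCast, Nat.mod_eq_of_lt (by omega)]
  have hgval2 : ∀ x, x < 2 * L → (g x).1.2.val = 3 * x := by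
    intro x hx
    show ((3 * x : ℕ) : ZMod (6 * L)).val = 3 * x
    rw [ZMod.val_natCast, Nat.mod_eq_of_lt (by omega)]
  have hv20i : v20.1.1.val = 2 := by
    show ((2 : ℕ) : ZMod (2 * K)).val = 2
    rw [ZMod.val_natCast, Nat.mod_eq_of_lt (by omega)]
  have hv20j : v20.1.2.val = 0 := by
    show ((0 : ℕ) : ZMod (6 * L)).val = 0
    rw [ZMod.val_natCast, Nat.mod_eq_of_lt (by omega)]
  have himg : D2 K L = (Finset.range (2 * L)).image g ∪ {v20} := by
    ext v
    rw [mem_D2 K L hK2, Finset.mem_union, Finset.mem_image, Finset.mem_singleton]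
    have hiv := iv_lt K L v; have hjv := jv_lt K L v
    have hpar := v_parity K L v
    constructor
    · rintro (⟨h0, h1⟩ | ⟨hi2, hj0⟩)
      · left
        refine ⟨v.1.2.val / 3, Finset.mem_range.2 (by omega), ?_⟩
        refine vert_ext K L ?_ ?_
        · rw [hgval1]
          omega
        · rw [hgval2 _ (by omega)]
          omega
      · right
        exact (vert_ext K L (by omega) (by omega)).symm
    · rintro (⟨x, hx, rfl⟩ | rfl)
      · left
        rw [Finset.mem_range] at hx
        refine ⟨by rw [hgval2 _ hx]; omega, by rw [hgval1]; omega⟩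
      · exact Or.inr ⟨hv20i, hv20j⟩
  rw [himg]
  rw [Finset.card_union_of_disjoint (by
    rw [Finset.disjoint_singleton_right]
    intro hmem
    obtain ⟨x, hx, heq⟩ := Finset.mem_image.1 hmem
    have h1 := hgval1 x
    rw [heq, hv20i] at h1
    omega)]
  rw [Finset.card_image_of_injOn (fun x hx y hy he => by
    have h1 := hgval2 x (Finset.mem_range.1 hx)
    have h2 := hgval2 y (Finset.mem_range.1 hy)
    rw [he] at h1
    omega), Finset.card_range, Finset.card_singleton]

variable (hK2 : 2 ≤ K)

/-- The reference path for the case `2L < K` (horizontal sweep). -/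
def path2 (hK2 : 2 ≤ K) : HCPath K L (confA K L) (confB K L) where
  n := 4 * K * L
  ω := fun t => Om K L (T2 K L) t.val
  first := by
    show Om K L (T2 K L) (0 : Fin (4 * K * L + 1)).val = confA K L
    rw [Fin.val_zero]
    exact Om_zero K L _
  last := by
    show Om K L (T2 K L) (Fin.last (4 * K * L)).val = confB K L
    rw [Fin.val_last]
    exact Om_last K L _ _ (fun v h => T2_lt K L v h)
  hc := fun i => Om_hc K L _ _ (T2_cross K L hK2)
  step := fun i => by
    have h := Om_step K L (T2 K L) i.val (T2_inj K L)
    have h1 : (i.castSucc).val = i.val := rfl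
    have h2 : (i.succ).val = i.val + 1 := rfl
    simpa [h1, h2] using h

lemma case2_height (hK : 2 ≤ K) (hKL : 2 * L < K) :
    pathHeight K L (path2 K L hK) - energy K L (confA K L) = ((min K (2 * L) : ℕ) : ℤ) + 1 := by
  have hKp := Kpos K; have hLp := Lpos L
  have hmin : min K (2 * L) = 2 * L := min_eq_right (le_of_lt hKL)
  set Na := nParticles K L (confA K L) with hNa
  have hub : ∀ t : ℕ,
      (Na : ℤ) ≤ (nParticles K L (Om K L (T2 K L) t) : ℤ) + (2 * L + 1) := by
    intro t
    have h := Om_count_lower K L (T2 K L) t (2 * L + 1) (partner2 K L) (partner2_B K L)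
      (partner2_inj K L) (bad2_card K L t)
    exact_mod_cast h
  have hts : (nParticles K L (Om K L (T2 K L) (2 * L + 1)) : ℤ) = (Na : ℤ) - (2 * L + 1) := by
    have h := Om_count_at K L (T2 K L) (2 * L + 1) (D2 K L) (D2_spec K L hK)
      (fun v hv => (Finset.mem_filter.1 hv).2.1)
    rw [D2_card K L hK] at h
    omega
  have hlt : 2 * L + 1 < 4 * K * L + 1 := by
    have h6 : 4 * 1 * L ≤ 4 * K * L :=
      Nat.mul_le_mul_right L (Nat.mul_le_mul_left 4 (by omega : 1 ≤ K))
    omega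
  have hH : pathHeight K L (path2 K L hK) = -(Na : ℤ) + (2 * L + 1) := by
    unfold pathHeight
    apply le_antisymm
    · apply Finset.sup'_le
      intro i _
      show energy K L (Om K L (T2 K L) i.val) ≤ _
      unfold energy
      have := hub i.val
      omega
    · refine le_trans ?_
        (Finset.le_sup' _ (Finset.mem_univ (⟨2 * L + 1, hlt⟩ : Fin (4 * K * L + 1))))
      show _ ≤ energy K L (Om K L (T2 K L) (2 * L + 1))
      unfold energy
      omega
  rw [hH, hmin]
  unfold energy
  push_cast
  ring

end Case2c

/-- Reference path: there exists a path `ω*` from `a` to `b` whose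
height satisfies `Φ_{ω*} − H(a) = min{K, 2L} + 1`. -/
theorem reference_path (hK : 2 ≤ K) (hL : 1 ≤ L) :
    ∃ p : HCPath K L (confA K L) (confB K L),
      pathHeight K L p - energy K L (confA K L) = ((min K (2 * L) : ℕ) : ℤ) + 1 := by
  rcases le_or_gt K (2 * L) with h | h
  · exact ⟨path1 K L, case1_height K L hK h⟩
  · exact ⟨path2 K L hK, case2_height K L hK h⟩
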